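/- Let (X,d) be a geodesic metric space and suppose there is a number D>0 and for every pair of points x,y ∈ X a continuous path η(x,y):[0,1]→X with η(x,y)(0)=x and η(x,y)(1)=y such that: (1) if d(x,y) ≤ 1 then the diameter of η(x,y)([0,1]) is at most D; (2) for all 0 ≤ s ≤ t ≤ 1 the Hausdorff distance between η(x,y)([s,t]) and η(η(x,y)(s), η(x,y)(t))([0,1]) is at most D; (3) for all x,y,z ∈ X, the set η(x,y)([0,1]) is contained in the D-neighborhood of η(x,z)([0,1]) ∪ η(z,y)([0,1]). Then (X,d) is δ-hyperbolic for a number δ>0 depending only on D. -/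

import Mathlib

/-- `c` restricted to `[a,b]` is a geodesic (an isometric embedding of the interval). -/
def IsGeodesicOn {X : Type*} [MetricSpace X] (c : ℝ → X) (a b : ℝ) : Prop :=
  ∀ s ∈ Set.Icc a b, ∀ t ∈ Set.Icc a b, dist (c s) (c t) = |s - t|

/-- A geodesic metric space: any two points are joined by a geodesic. -/
def GeodesicSpace (X : Type*) [MetricSpace X] : Prop :=
  ∀ x y : X, ∃ c : ℝ → X, c 0 = x ∧ c (dist x y) = y ∧ IsGeodesicOn c 0 (dist x y)

/-- The `δ`-thin triangle condition: for every geodesic triangle with sides `a`, `b`, `c`,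
the side `c` is contained in the `δ`-neighborhood of `a ∪ b`. -/
def ThinTriangles (X : Type*) [MetricSpace X] (δ : ℝ) : Prop :=
  ∀ x y z : X, ∀ a b c : ℝ → X,
    (a 0 = y ∧ a (dist y z) = z ∧ IsGeodesicOn a 0 (dist y z)) →
    (b 0 = z ∧ b (dist z x) = x ∧ IsGeodesicOn b 0 (dist z x)) →
    (c 0 = x ∧ c (dist x y) = y ∧ IsGeodesicOn c 0 (dist x y)) →
    ∀ p ∈ c '' Set.Icc 0 (dist x y),
      Metric.infDist p ((a '' Set.Icc 0 (dist y z)) ∪ (b '' Set.Icc 0 (dist z x))) ≤ δ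

open Metric Set

section
variable {X : Type*} [MetricSpace X]

lemma exists_unit_chain {c : ℝ → X} {l : ℝ} (hl : 0 ≤ l) (hgeo : IsGeodesicOn c 0 l) :
    ∃ n : ℕ, ∃ z : ℕ → X, (n : ℝ) ≤ l + 1 ∧ z 0 = c 0 ∧ z n = c l ∧
      (∀ i, i < n → dist (z i) (z (i+1)) ≤ 1) ∧
      (∀ i, i ≤ n → z i ∈ c '' Icc 0 l) := by
  refine ⟨⌈l⌉₊, fun i => c (min (i : ℝ) l), ?_, ?_, ?_, ?_, ?_⟩
  · have := Nat.ceil_lt_add_one hl; linarith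
  · have h0 : min ((0:ℕ):ℝ) l = 0 := by simp [hl]
    simp only [h0]
  · have hc : min ((⌈l⌉₊:ℕ):ℝ) l = l := min_eq_right (Nat.le_ceil l)
    simp only [hc]
  · intro i hi
    have m1 : min ((i:ℝ)) l ∈ Icc (0:ℝ) l := ⟨le_min (by positivity) hl, min_le_right _ _⟩
    have m2 : min (((i+1:ℕ)):ℝ) l ∈ Icc (0:ℝ) l := ⟨le_min (by positivity) hl, min_le_right _ _⟩
    rw [hgeo _ m1 _ m2]
    have e1 : min ((i:ℝ)) l ≤ min (((i+1:ℕ)):ℝ) l := by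
      apply min_le_min _ le_rfl
      push_cast; linarith
    have e2 : min (((i+1:ℕ)):ℝ) l ≤ min ((i:ℝ)) l + 1 := by
      rcases le_total (i:ℝ) l with hc | hc
      · rw [min_eq_left hc]
        push_cast
        exact (min_le_left _ _)
      · rw [min_eq_right hc, min_eq_right (by push_cast; linarith : l ≤ (((i+1:ℕ)):ℝ))]
        linarith
    rw [abs_le]
    constructor <;> linarith
  · intro i _
    exact ⟨min ((i:ℝ)) l, ⟨le_min (by positivity) hl, min_le_right _ _⟩, rfl⟩

lemma chain_concat {z1 z2 : ℕ → X} {n1 n2 : ℕ} (hj : z1 n1 = z2 0)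
    (s1 : ∀ i, i < n1 → dist (z1 i) (z1 (i+1)) ≤ 1)
    (s2 : ∀ i, i < n2 → dist (z2 i) (z2 (i+1)) ≤ 1) :
    ∃ z : ℕ → X, z 0 = z1 0 ∧ z (n1 + n2) = z2 n2 ∧
      (∀ i, i < n1 + n2 → dist (z i) (z (i+1)) ≤ 1) ∧
      (∀ i, i ≤ n1 + n2 → z i ∈ (z1 '' Iic n1) ∪ (z2 '' Iic n2)) := by
  refine ⟨fun i => if i ≤ n1 then z1 i else z2 (i - n1), by simp, ?_, ?_, ?_⟩
  · by_cases hc : n1 + n2 ≤ n1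
    · have h0 : n2 = 0 := by omega
      simp only [if_pos hc, h0, Nat.add_zero]
      simp [hj, h0]
    · have e : n1 + n2 - n1 = n2 := by omega
      simp only [if_neg hc, e]
  · intro i hi
    by_cases h1c : i + 1 ≤ n1
    · have hile : i ≤ n1 := by omega
      simp only [if_pos h1c, if_pos hile]
      exact s1 i (by omega)
    · by_cases h2c : i ≤ n1
      · have hi1 : i = n1 := by omega
        have hn2 : 0 < n2 := by omega
        have e : i + 1 - n1 = 1 := by omega
        simp only [if_pos h2c, if_neg h1c, e]
        rw [hi1, hj]
        simpa using s2 0 hn2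
      · have e1 : i + 1 - n1 = (i - n1) + 1 := by omega
        simp only [if_neg h2c, if_neg h1c, e1]
        exact s2 (i - n1) (by omega)
  · intro i hi
    by_cases hc : i ≤ n1
    · exact Or.inl ⟨i, by simpa using hc, by simp [hc]⟩
    · refine Or.inr ⟨i - n1, by simp; omega, by simp [hc]⟩

variable (η : X → X → ℝ → X)

lemma chain_bound (h : ℝ) (h1 : 1 ≤ h)
    (hend : ∀ x y : X, η x y 0 = x ∧ η x y 1 = y)
    (hdiam : ∀ x y : X, dist x y ≤ 1 → Metric.diam (η x y '' Icc 0 1) ≤ h)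
    (hbdd : ∀ x y : X, Bornology.IsBounded (η x y '' Icc (0:ℝ) 1))
    (hthin : ∀ x y z : X, ∀ p ∈ η x y '' Icc (0:ℝ) 1,
      infDist p ((η x z '' Icc (0:ℝ) 1) ∪ (η z y '' Icc (0:ℝ) 1)) ≤ h) :
    ∀ k n : ℕ, n ≤ 2 ^ k → ∀ z : ℕ → X, (∀ i, i < n → dist (z i) (z (i+1)) ≤ 1) →
      ∀ p ∈ η (z 0) (z n) '' Icc (0:ℝ) 1, infDist p (z '' Iic n) ≤ h * ((k:ℝ) + 1) := by
  intro k
  induction k with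
  | zero =>
    intro n hn z hz p hp
    norm_num at hn
    have hd : dist (z 0) (z n) ≤ 1 := by
      interval_cases n
      · simp
      · exact hz 0 (by norm_num)
    have h0mem : z 0 ∈ η (z 0) (z n) '' Icc (0:ℝ) 1 :=
      ⟨0, ⟨le_refl _, zero_le_one⟩, (hend _ _).1⟩
    have hph : dist p (z 0) ≤ h :=
      le_trans (dist_le_diam_of_mem (hbdd _ _) hp h0mem) (hdiam _ _ hd)
    have hmem : z 0 ∈ z '' Iic n := ⟨0, by simp, rfl⟩
    calc infDist p (z '' Iic n) ≤ dist p (z 0) := infDist_le_dist_of_mem hmem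
      _ ≤ h := hph
      _ ≤ h * ((0:ℕ) + 1 : ℝ) := by norm_num
  | succ k ih =>
    intro n hn z hz p hp
    set m := min n (2 ^ k) with hm
    have hmn : m ≤ n := min_le_left _ _
    have hm2k : m ≤ 2 ^ k := min_le_right _ _
    have hnm2k : n - m ≤ 2 ^ k := by
      have : 2 ^ (k+1) = 2 ^ k + 2 ^ k := by rw [pow_succ]; ring
      omega
    have hchne : (z '' Iic n).Nonempty := ⟨z 0, 0, by simp, rfl⟩
    refine le_of_forall_pos_le_add ?_
    intro ε hε
    have hunion_ne : ((η (z 0) (z m) '' Icc (0:ℝ) 1) ∪ (η (z m) (z n) '' Icc (0:ℝ) 1)).Nonempty :=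
      ⟨η (z 0) (z m) 0, Or.inl ⟨0, ⟨le_refl _, zero_le_one⟩, rfl⟩⟩
    have hlt : infDist p ((η (z 0) (z m) '' Icc (0:ℝ) 1) ∪ (η (z m) (z n) '' Icc (0:ℝ) 1))
        < h + ε := lt_of_le_of_lt (hthin (z 0) (z n) (z m) p hp) (by linarith)
    obtain ⟨q, hq, hpq⟩ := (infDist_lt_iff hunion_ne).mp hlt
    rcases hq with hq | hq
    · have hIH := ih m hm2k z (fun i hi => hz i (by omega)) q hq
      have hsub : z '' Iic m ⊆ z '' Iic n := image_mono (Iic_subset_Iic.mpr hmn)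
      have hsubne : (z '' Iic m).Nonempty := ⟨z 0, 0, by simp, rfl⟩
      have hmono := infDist_le_infDist_of_subset hsub hsubne (x := q)
      have htri : infDist p (z '' Iic n) ≤ infDist q (z '' Iic n) + dist p q :=
        infDist_le_infDist_add_dist
      have : infDist p (z '' Iic n) ≤ h * ((k:ℝ)+1) + (h + ε) := by linarith
      calc infDist p (z '' Iic n) ≤ h * ((k:ℝ)+1) + (h + ε) := this
        _ = h * (((k+1:ℕ):ℝ) + 1) + ε := by push_cast; ring
    · have e : m + (n - m) = n := by omega
      have hz' : ∀ i, i < n - m → dist (z (m+i)) (z (m+(i+1))) ≤ 1 := by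
        intro i hi
        have h0 := hz (m+i) (by omega)
        have e2 : m + (i+1) = (m+i) + 1 := by omega
        rw [e2]; exact h0
      have hq2 : q ∈ η ((fun i => z (m+i)) 0) ((fun i => z (m+i)) (n - m)) '' Icc (0:ℝ) 1 := by
        simpa only [Nat.add_zero, e] using hq
      have hIH := ih (n - m) hnm2k (fun i => z (m+i)) hz' q hq2
      have hsub : (fun i => z (m+i)) '' Iic (n-m) ⊆ z '' Iic n := by
        rintro _ ⟨i, hi, rfl⟩
        exact ⟨m + i, by simp at hi ⊢; omega, rfl⟩
      have hsubne : ((fun i => z (m+i)) '' Iic (n-m)).Nonempty := ⟨z (m+0), 0, by simp, rfl⟩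
      have hmono := infDist_le_infDist_of_subset hsub hsubne (x := q)
      have htri : infDist p (z '' Iic n) ≤ infDist q (z '' Iic n) + dist p q :=
        infDist_le_infDist_add_dist
      have : infDist p (z '' Iic n) ≤ h * ((k:ℝ)+1) + (h + ε) := by linarith
      calc infDist p (z '' Iic n) ≤ h * ((k:ℝ)+1) + (h + ε) := this
        _ = h * (((k+1:ℕ):ℝ) + 1) + ε := by push_cast; ring
end


section Main
variable {X : Type*} [MetricSpace X]

lemma geodesic_continuousOn {c : ℝ → X} {a b : ℝ} (hc : IsGeodesicOn c a b) :
    ContinuousOn c (Icc a b) := by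
  have : LipschitzOnWith 1 c (Icc a b) := by
    apply LipschitzOnWith.of_dist_le_mul
    intro s hs t ht
    rw [hc s hs t ht, Real.dist_eq]
    simp
  exact this.continuousOn

lemma nat_sq_lt : ∀ j : ℕ, j * j < 2 ^ (j + 2) := by
  intro j
  induction j with
  | zero => norm_num
  | succ j ih =>
    have h1 : j < 2 ^ j := Nat.lt_two_pow_self
    have h2 : 2 ^ (j + 1 + 2) = 2 ^ (j + 2) + 2 ^ (j + 2) := by rw [pow_succ]; ring
    have h3 : 2 * j + 1 ≤ 2 ^ (j + 2) := by
      have : 2 ^ (j + 2) = 4 * 2 ^ j := by rw [pow_add]; ring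
      omega
    calc (j+1) * (j+1) = j * j + (2 * j + 1) := by ring
      _ < 2 ^ (j+2) + (2*j+1) := by omega
      _ ≤ 2 ^ (j+2) + 2 ^ (j+2) := by omega
      _ = 2 ^ (j+1+2) := h2.symm

variable (η : X → X → ℝ → X)

set_option maxHeartbeats 2000000 in
lemma eta_near_geodesic (h : ℝ) (h1 : 1 ≤ h) (geod : GeodesicSpace X)
    (hcont : ∀ x y : X, ContinuousOn (η x y) (Icc 0 1))
    (hend : ∀ x y : X, η x y 0 = x ∧ η x y 1 = y)
    (hdiam : ∀ x y : X, dist x y ≤ 1 → Metric.diam (η x y '' Icc 0 1) ≤ h)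
    (hsub : ∀ x y : X, ∀ s t : ℝ, 0 ≤ s → s ≤ t → t ≤ 1 →
      Metric.hausdorffDist (η x y '' Icc s t) (η (η x y s) (η x y t) '' Icc (0:ℝ) 1) ≤ h)
    (hthin : ∀ x y z : X, ∀ p ∈ η x y '' Icc (0:ℝ) 1,
      infDist p ((η x z '' Icc (0:ℝ) 1) ∪ (η z y '' Icc (0:ℝ) 1)) ≤ h)
    (x y : X) (c : ℝ → X) (hc0 : c 0 = x) (hcL : c (dist x y) = y)
    (hgeo : IsGeodesicOn c 0 (dist x y)) :
    ∀ p ∈ η x y '' Icc (0:ℝ) 1, infDist p (c '' Icc 0 (dist x y)) ≤ 396 * h^2 + 3*h := by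
  have hbdd : ∀ u v : X, Bornology.IsBounded (η u v '' Icc (0:ℝ) 1) :=
    fun u v => ((isCompact_Icc).image_of_continuousOn (hcont u v)).isBounded
  have hne : ∀ u v : X, (η u v '' Icc (0:ℝ) 1).Nonempty :=
    fun u v => (nonempty_Icc.mpr zero_le_one).image _
  set L := dist x y with hLdef
  have hL : 0 ≤ L := dist_nonneg
  set G := c '' Icc 0 L with hGdef
  have hGc : IsCompact G := isCompact_Icc.image_of_continuousOn (geodesic_continuousOn hgeo)
  have hGne : G.Nonempty := ⟨c 0, 0, ⟨le_refl _, hL⟩, rfl⟩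
  -- max point
  have hfc : ContinuousOn (fun v => infDist (η x y v) G) (Icc (0:ℝ) 1) :=
    (continuous_infDist_pt G).comp_continuousOn (hcont x y)
  obtain ⟨u, hu, hmax⟩ := isCompact_Icc.exists_isMaxOn (nonempty_Icc.mpr zero_le_one) hfc
  set H := infDist (η x y u) G with hHdef
  have hH0 : 0 ≤ H := infDist_nonneg
  have hub : ∀ v, v ∈ Icc (0:ℝ) 1 → infDist (η x y v) G ≤ H := fun v hv => hmax hv
  suffices hHK : H ≤ 396 * h^2 + 3*h by
    rintro p ⟨v, hv, rfl⟩; exact le_trans (hub v hv) hHK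
  set p := η x y u with hpdef
  obtain ⟨w₀, hw₀G, hw₀⟩ := hGc.exists_infDist_eq_dist hGne p
  obtain ⟨τ₀, hτ₀, rfl⟩ := hw₀G
  have hdw : dist p (c τ₀) = H := hw₀.symm
  -- geodesic distance facts
  have hcx : ∀ s, s ∈ Icc 0 L → dist (c s) x = s := by
    intro s hs
    rw [← hc0, hgeo s hs 0 ⟨le_refl _, hL⟩, sub_zero, abs_of_nonneg hs.1]
  have hcy : ∀ s, s ∈ Icc 0 L → dist (c s) y = L - s := by
    intro s hs
    rw [← hcL, hgeo s hs L ⟨hL, le_refl _⟩, abs_sub_comm, abs_of_nonneg (by linarith [hs.2])]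
  have hpx : τ₀ - H ≤ dist p x := by
    have ht := dist_triangle (c τ₀) p x
    rw [dist_comm (c τ₀) p, hdw] at ht
    rw [hcx τ₀ hτ₀] at ht
    linarith
  have hpx' : dist p x ≤ τ₀ + H := by
    have ht := dist_triangle p (c τ₀) x
    rw [hdw, hcx τ₀ hτ₀] at ht
    linarith
  have hpy : (L - τ₀) - H ≤ dist p y := by
    have ht := dist_triangle (c τ₀) p y
    rw [dist_comm (c τ₀) p, hdw, hcy τ₀ hτ₀] at ht
    linarith
  have hpy' : dist p y ≤ H + (L - τ₀) := by
    have ht := dist_triangle p (c τ₀) y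
    rw [hdw, hcy τ₀ hτ₀] at ht
    linarith
  -- IVT setup
  set g := fun v => dist (η x y v) x - dist (η x y v) y with hgdef
  have hgc : ContinuousOn g (Icc (0:ℝ) 1) :=
    ((continuous_id.dist continuous_const).comp_continuousOn (hcont x y)).sub
      ((continuous_id.dist continuous_const).comp_continuousOn (hcont x y))
  have hg0 : g 0 = -L := by
    simp only [hgdef, (hend x y).1, dist_self, dist_comm]
    simp [hLdef]
  have hg1 : g 1 = L := by
    simp only [hgdef, (hend x y).2, dist_self]
    simp [hLdef, dist_comm]
  set τA := max (τ₀ - 10*H) 0 with hτAdef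
  set τB := min (τ₀ + 10*H) L with hτBdef
  have hτAmem : τA ∈ Icc 0 L := ⟨le_max_right _ _, max_le (by linarith [hτ₀.2]) hL⟩
  have hτBmem : τB ∈ Icc 0 L := ⟨le_min (by linarith [hτ₀.1]) hL, min_le_right _ _⟩
  have hτAτ₀ : τA ≤ τ₀ := max_le (by linarith) hτ₀.1
  have hτ₀τB : τ₀ ≤ τB := le_min (by linarith) hτ₀.2
  have hwidth : τB - τA ≤ 20*H := by
    have h1' := le_max_left (τ₀ - 10*H) 0
    have h2' := min_le_left (τ₀ + 10*H) L
    linarith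
  -- claim A
  have claimA : ∃ vA ∈ Icc (0:ℝ) u, dist (η x y vA) (c τA) ≤ 2*H ∧
      (τ₀ - 10*H ≤ 0 → dist (η x y vA) (c τA) = 0) := by
    by_cases hb : τ₀ - 10*H ≤ 0
    · have hτA0 : τA = 0 := max_eq_right hb
      refine ⟨0, ⟨le_refl _, hu.1⟩, ?_, fun _ => ?_⟩
      · rw [(hend x y).1, hτA0, hc0, dist_self]; linarith
      · rw [(hend x y).1, hτA0, hc0, dist_self]
    · push_neg at hb
      have hτAeq : τA = τ₀ - 10*H := max_eq_left (le_of_lt hb)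
      have hsub1 : Icc (0:ℝ) u ⊆ Icc 0 1 := Icc_subset_Icc le_rfl hu.2
      have hval : (2*τA - L) ∈ Icc (g 0) (g u) := by
        constructor
        · rw [hg0]; have := hτAmem.1; linarith
        · have hgu : g u = dist p x - dist p y := rfl
          rw [hgu, hτAeq]
          linarith
      obtain ⟨vA, hvA, hgvA⟩ := intermediate_value_Icc hu.1 (hgc.mono hsub1) hval
      refine ⟨vA, hvA, ?_, fun hcon => absurd hcon (by linarith)⟩
      have hqH : infDist (η x y vA) G ≤ H := hub vA (hsub1 hvA)
      obtain ⟨w1, hw1G, hw1⟩ := hGc.exists_infDist_eq_dist hGne (η x y vA)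
      obtain ⟨σ, hσ, rfl⟩ := hw1G
      have hqw1 : dist (η x y vA) (c σ) ≤ H := by rw [← hw1]; exact hqH
      have e1 : dist (η x y vA) x ≤ σ + H := by
        have := dist_triangle (η x y vA) (c σ) x
        rw [hcx σ hσ] at this; linarith
      have e2 : σ - H ≤ dist (η x y vA) x := by
        have := dist_triangle (c σ) (η x y vA) x
        rw [dist_comm (c σ) (η x y vA)] at this
        rw [hcx σ hσ] at this; linarith
      have e3 : dist (η x y vA) y ≤ (L - σ) + H := by
        have := dist_triangle (η x y vA) (c σ) y
        rw [hcy σ hσ] at this; linarith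
      have e4 : (L - σ) - H ≤ dist (η x y vA) y := by
        have := dist_triangle (c σ) (η x y vA) y
        rw [dist_comm (c σ) (η x y vA), hcy σ hσ] at this; linarith
      have hgv : dist (η x y vA) x - dist (η x y vA) y = 2*τA - L := hgvA
      have hστ : |σ - τA| ≤ H := abs_le.mpr ⟨by linarith, by linarith⟩
      calc dist (η x y vA) (c τA) ≤ dist (η x y vA) (c σ) + dist (c σ) (c τA) :=
            dist_triangle _ _ _
        _ ≤ H + |σ - τA| := by rw [hgeo σ hσ τA hτAmem]; linarith
        _ ≤ 2*H := by linarith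
  -- claim B
  have claimB : ∃ vB ∈ Icc u (1:ℝ), dist (η x y vB) (c τB) ≤ 2*H ∧
      (L ≤ τ₀ + 10*H → dist (η x y vB) (c τB) = 0) := by
    by_cases hb : L ≤ τ₀ + 10*H
    · have hτBL : τB = L := min_eq_right hb
      refine ⟨1, ⟨hu.2, le_refl _⟩, ?_, fun _ => ?_⟩
      · rw [(hend x y).2, hτBL, hcL, dist_self]; linarith
      · rw [(hend x y).2, hτBL, hcL, dist_self]
    · push_neg at hb
      have hτBeq : τB = τ₀ + 10*H := min_eq_left (le_of_lt hb)
      have hsub1 : Icc u (1:ℝ) ⊆ Icc 0 1 := Icc_subset_Icc hu.1 le_rfl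
      have hval : (2*τB - L) ∈ Icc (g u) (g 1) := by
        constructor
        · have hgu : g u = dist p x - dist p y := rfl
          rw [hgu, hτBeq]
          linarith
        · rw [hg1]; have := hτBmem.2; linarith
      obtain ⟨vB, hvB, hgvB⟩ := intermediate_value_Icc hu.2 (hgc.mono hsub1) hval
      refine ⟨vB, hvB, ?_, fun hcon => absurd hcon (by linarith)⟩
      have hqH : infDist (η x y vB) G ≤ H := hub vB (hsub1 hvB)
      obtain ⟨w1, hw1G, hw1⟩ := hGc.exists_infDist_eq_dist hGne (η x y vB)
      obtain ⟨σ, hσ, rfl⟩ := hw1G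
      have hqw1 : dist (η x y vB) (c σ) ≤ H := by rw [← hw1]; exact hqH
      have e1 : dist (η x y vB) x ≤ σ + H := by
        have := dist_triangle (η x y vB) (c σ) x
        rw [hcx σ hσ] at this; linarith
      have e2 : σ - H ≤ dist (η x y vB) x := by
        have := dist_triangle (c σ) (η x y vB) x
        rw [dist_comm (c σ) (η x y vB), hcx σ hσ] at this; linarith
      have e3 : dist (η x y vB) y ≤ (L - σ) + H := by
        have := dist_triangle (η x y vB) (c σ) y
        rw [hcy σ hσ] at this; linarith
      have e4 : (L - σ) - H ≤ dist (η x y vB) y := by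
        have := dist_triangle (c σ) (η x y vB) y
        rw [dist_comm (c σ) (η x y vB), hcy σ hσ] at this; linarith
      have hgv : dist (η x y vB) x - dist (η x y vB) y = 2*τB - L := hgvB
      have hστ : |σ - τB| ≤ H := abs_le.mpr ⟨by linarith, by linarith⟩
      calc dist (η x y vB) (c τB) ≤ dist (η x y vB) (c σ) + dist (c σ) (c τB) :=
            dist_triangle _ _ _
        _ ≤ H + |σ - τB| := by rw [hgeo σ hσ τB hτBmem]; linarith
        _ ≤ 2*H := by linarith
  obtain ⟨vA, hvAmem, hvA2H, hvAflag⟩ := claimA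
  obtain ⟨vB, hvBmem, hvB2H, hvBflag⟩ := claimB
  set a := η x y vA with hadef
  set b := η x y vB with hbdef
  set A := c τA with hAdef
  set B := c τB with hBdef
  have hl1 : dist a A ≤ 2*H := hvA2H
  have hl3 : dist B b ≤ 2*H := by rw [dist_comm]; exact hvB2H
  -- chains
  obtain ⟨ga, hga0, hgaL, hgageo⟩ := geod a A
  obtain ⟨n1, z1, hn1, hz10, hz1n, hs1, hm1⟩ := exists_unit_chain dist_nonneg hgageo
  have hgeo2 : IsGeodesicOn (fun t => c (τA + t)) 0 (τB - τA) := by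
    intro s hs t ht
    have m1 : τA + s ∈ Icc 0 L := ⟨by linarith [hτAmem.1, hs.1], by linarith [hτBmem.2, hs.2]⟩
    have m2 : τA + t ∈ Icc 0 L := ⟨by linarith [hτAmem.1, ht.1], by linarith [hτBmem.2, ht.2]⟩
    have := hgeo (τA + s) m1 (τA + t) m2
    simpa only [add_sub_add_left_eq_sub] using this
  obtain ⟨n2, z2, hn2, hz20', hz2n', hs2, hm2⟩ :=
    exists_unit_chain (by linarith : (0:ℝ) ≤ τB - τA) hgeo2
  have hz20 : z2 0 = A := by
    have e : z2 0 = c (τA + 0) := hz20'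
    rw [add_zero] at e; exact e
  have hz2n : z2 n2 = B := by
    have e : z2 n2 = c (τA + (τB - τA)) := hz2n'
    rw [show τA + (τB - τA) = τB by ring] at e; exact e
  obtain ⟨gb, hgb0, hgbL, hgbgeo⟩ := geod B b
  obtain ⟨n3, z3, hn3, hz30, hz3n, hs3, hm3⟩ := exists_unit_chain dist_nonneg hgbgeo
  have hj12 : z1 n1 = z2 0 := by rw [hz1n, hgaL, hz20]
  obtain ⟨z12, hz120, hz12n, hs12, hm12⟩ := chain_concat hj12 hs1 hs2
  have hj3 : z12 (n1+n2) = z3 0 := by rw [hz12n, hz2n, hz30, hgb0]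
  obtain ⟨z, hz0, hzn, hsz, hmz⟩ := chain_concat hj3 hs12 hs3
  set n := n1 + n2 + n3 with hndef
  have hzend0 : z 0 = a := by rw [hz0, hz120, hz10, hga0]
  have hzendn : z n = b := by rw [hndef]; rw [show n1 + n2 + n3 = (n1+n2)+n3 from rfl]; rw [hzn, hz3n, hgbL]
  have hHn : ((n:ℕ):ℝ) ≤ 24*H + 3 := by
    have : ((n:ℕ):ℝ) = (n1:ℝ) + (n2:ℝ) + (n3:ℝ) := by rw [hndef]; push_cast; ring
    rw [this]
    linarith [hn1, hn2, hn3, hl1, hl3, hwidth]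
  set k := Nat.clog 2 n with hkdef
  have hn2k : n ≤ 2 ^ k := Nat.le_pow_clog (by norm_num) n
  -- classification of chain points
  have hclass : ∀ i, i ≤ n → (∃ t ∈ Icc (0:ℝ) (dist a A), z i = ga t) ∨ z i ∈ G ∨
      (∃ t ∈ Icc (0:ℝ) (dist B b), z i = gb t) := by
    intro i hi
    rcases hmz i hi with h12 | h3
    · obtain ⟨j, hj, hji⟩ := h12
      rcases hm12 j (by simpa using hj) with hA1 | hA2
      · obtain ⟨jj, hjj, hjji⟩ := hA1
        obtain ⟨t, ht, hte⟩ := hm1 jj (by simpa using hjj)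
        refine Or.inl ⟨t, ht, ?_⟩
        rw [← hji, ← hjji]; exact hte.symm
      · obtain ⟨jj, hjj, hjji⟩ := hA2
        obtain ⟨t, ht, hte⟩ := hm2 jj (by simpa using hjj)
        have hte' : c (τA + t) = z2 jj := hte
        refine Or.inr (Or.inl ?_)
        rw [← hji, ← hjji, ← hte']
        exact ⟨τA + t, ⟨by linarith [hτAmem.1, ht.1], by linarith [hτBmem.2, ht.2]⟩, rfl⟩
    · obtain ⟨jj, hjj, hjji⟩ := h3
      obtain ⟨t, ht, hte⟩ := hm3 jj (by simpa using hjj)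
      refine Or.inr (Or.inr ⟨t, ht, ?_⟩)
      rw [← hjji]; exact hte.symm
  -- main estimate
  have hbound : H ≤ h * ((k:ℝ) + 2) := by
    refine le_of_forall_pos_le_add ?_
    intro ε hε
    have hvAvB : vA ≤ vB := le_trans hvAmem.2 hvBmem.1
    have hpmem : p ∈ η x y '' Icc vA vB := ⟨u, ⟨hvAmem.2, hvBmem.1⟩, rfl⟩
    have hHd := hsub x y vA vB hvAmem.1 hvAvB hvBmem.2
    have hbdd2 : Bornology.IsBounded (η x y '' Icc vA vB) :=
      (isCompact_Icc.image_of_continuousOn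
        ((hcont x y).mono (Icc_subset_Icc hvAmem.1 hvBmem.2))).isBounded
    have hfin : EMetric.hausdorffEdist (η x y '' Icc vA vB) (η a b '' Icc (0:ℝ) 1) ≠ ⊤ :=
      hausdorffEdist_ne_top_of_nonempty_of_bounded ⟨p, hpmem⟩ (hne a b) hbdd2 (hbdd a b)
    obtain ⟨q', hq', hpq'⟩ := exists_dist_lt_of_hausdorffDist_lt hpmem
      (lt_of_le_of_lt hHd (by linarith : h < h + ε/2)) hfin
    have hq'arg : q' ∈ η (z 0) (z n) '' Icc (0:ℝ) 1 := by rw [hzend0, hzendn]; exact hq'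
    have hq'chain : infDist q' (z '' Iic n) ≤ h*((k:ℝ)+1) :=
      chain_bound η h h1 hend hdiam hbdd hthin k n hn2k z hsz q' hq'arg
    have hzne : (z '' Iic n).Nonempty := ⟨z 0, 0, by simp, rfl⟩
    obtain ⟨ζ, hζ, hq'ζ⟩ := (infDist_lt_iff hzne).mp
      (lt_of_le_of_lt hq'chain (by linarith : h*((k:ℝ)+1) < h*((k:ℝ)+1) + ε/2))
    have hpζ : dist p ζ < h*((k:ℝ)+2) + ε := by
      have htr := dist_triangle p q' ζ
      have hr : h*((k:ℝ)+2) = h + h*((k:ℝ)+1) := by ring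
      linarith
    obtain ⟨i, hiIic, hζe⟩ := hζ
    rcases hclass i (by simpa using hiIic) with ⟨t, ht, hzi⟩ | hziG | ⟨t, ht, hzi⟩
    · -- leg A
      have hζA : dist ζ A ≤ dist a A := by
        rw [← hζe, hzi]
        have hdg := hgageo t ht (dist a A) ⟨dist_nonneg, le_refl _⟩
        rw [hgaL] at hdg
        rw [hdg, abs_le]
        constructor <;> linarith [ht.1, ht.2]
      by_cases hbA : τ₀ - 10*H ≤ 0
      · have h0 : dist a A = 0 := hvAflag hbA
        have hζG : ζ ∈ G := by
          have : ζ = A := eq_of_dist_eq_zero (le_antisymm (by linarith) dist_nonneg)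
          rw [this]; exact ⟨τA, hτAmem, rfl⟩
        have : H ≤ dist p ζ := by
          rw [hHdef]; exact infDist_le_dist_of_mem hζG
        linarith
      · push_neg at hbA
        have hτAeq : τA = τ₀ - 10*H := max_eq_left (le_of_lt hbA)
        have hdτ : dist (c τ₀) A = 10*H := by
          rw [hgeo τ₀ hτ₀ τA hτAmem, hτAeq, show τ₀ - (τ₀-10*H) = 10*H by ring]
          exact abs_of_nonneg (by linarith)
        have h9 : 9*H ≤ dist p A := by
          have htr := dist_triangle (c τ₀) p A
          rw [dist_comm (c τ₀) p, hdw] at htr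
          linarith
        have h7 : dist p A ≤ dist p ζ + dist ζ A := dist_triangle _ _ _
        have : H ≤ dist p ζ := by linarith
        linarith
    · -- middle
      have : H ≤ dist p ζ := by
        rw [hHdef]
        exact infDist_le_dist_of_mem (hζe ▸ hziG)
      linarith
    · -- leg B
      have hζB : dist ζ B ≤ dist B b := by
        rw [← hζe, hzi]
        have hdg := hgbgeo t ht 0 ⟨le_refl _, dist_nonneg⟩
        rw [hgb0, sub_zero] at hdg
        rw [dist_comm] at hdg
        rw [dist_comm, hdg, abs_le]  -- careful
        constructor <;> linarith [ht.1, ht.2]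
      by_cases hbB : L ≤ τ₀ + 10*H
      · have h0 : dist b B = 0 := hvBflag hbB
        have hζG : ζ ∈ G := by
          have : ζ = B := eq_of_dist_eq_zero
            (le_antisymm (by rw [dist_comm b B] at h0; linarith) dist_nonneg)
          rw [this]; exact ⟨τB, hτBmem, rfl⟩
        have : H ≤ dist p ζ := by
          rw [hHdef]; exact infDist_le_dist_of_mem hζG
        linarith
      · push_neg at hbB
        have hτBeq : τB = τ₀ + 10*H := min_eq_left (le_of_lt hbB)
        have hdτ : dist (c τ₀) B = 10*H := by
          rw [hgeo τ₀ hτ₀ τB hτBmem, hτBeq, show τ₀ - (τ₀+10*H) = -(10*H) by ring, abs_neg]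
          exact abs_of_nonneg (by linarith)
        have h9 : 9*H ≤ dist p B := by
          have htr := dist_triangle (c τ₀) p B
          rw [dist_comm (c τ₀) p, hdw] at htr
          linarith
        have h7 : dist p B ≤ dist p ζ + dist ζ B := dist_triangle _ _ _
        have : H ≤ dist p ζ := by linarith
        linarith
  -- arithmetic endgame
  by_cases hn1' : n ≤ 1
  · have hk0 : k = 0 := by
      rw [hkdef]
      interval_cases n <;> simp
    rw [hk0] at hbound
    push_cast at hbound
    nlinarith [h1]
  · push_neg at hn1'
    have hklt : 2 ^ (k - 1) < n := Nat.pow_pred_clog_lt_self (by norm_num) hn1'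
    have hk1 : 1 ≤ k := by
      by_contra hk
      push_neg at hk
      interval_cases k
      · simp at hn2k; omega
    set j := k - 1 with hjdef
    have hkj : k = j + 1 := by omega
    have hrealj : (2:ℝ)^j < 24*H + 3 := by
      have h1n : ((2^j : ℕ):ℝ) < (n:ℝ) := by exact_mod_cast hklt
      have h2c : ((2^j : ℕ):ℝ) = (2:ℝ)^j := by push_cast; ring
      linarith [hHn]
    have hHk : H ≤ h * ((j:ℝ) + 3) := by
      rw [hkj] at hbound
      push_cast at hbound
      linarith
    have hsq : ((j:ℝ))*(j:ℝ) < 4 * (2:ℝ)^j := by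
      have hnat := nat_sq_lt j
      have hc : ((j*j : ℕ):ℝ) < ((2^(j+2) : ℕ):ℝ) := by exact_mod_cast hnat
      push_cast at hc
      rw [pow_add] at hc
      norm_num at hc
      linarith [hc]
    by_cases hj0 : j = 0
    · rw [hj0] at hHk
      push_cast at hHk
      nlinarith [h1]
    · have hj1 : (1:ℝ) ≤ (j:ℝ) := by exact_mod_cast Nat.one_le_iff_ne_zero.mpr hj0
      have e96 : (j:ℝ)*(j:ℝ) < 96*H + 12 := by linarith
      have e2 : 96*H + 12 ≤ 96*(h*((j:ℝ)+3)) + 12 := by linarith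
      have e3 : 96*(h*((j:ℝ)+3)) + 12 ≤ 396*h*(j:ℝ) := by
        nlinarith [mul_nonneg (by linarith : (0:ℝ) ≤ h) (by linarith : (0:ℝ) ≤ (j:ℝ)-1), h1, hj1]
      have hs2 : (j:ℝ)*(j:ℝ) < 396*h*(j:ℝ) := by linarith
      have hjb : (j:ℝ) < 396*h := by
        by_contra h'
        push_neg at h'
        have : 396*h*(j:ℝ) ≤ (j:ℝ)*(j:ℝ) :=
          mul_le_mul_of_nonneg_right h' (by linarith)
        linarith
      have hfin : h*((j:ℝ)+3) < h*(396*h+3) :=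
        mul_lt_mul_of_pos_left (by linarith) (by linarith)
      nlinarith [hHk, hfin]

set_option maxHeartbeats 1000000 in
lemma geodesic_near_eta (h : ℝ) (h1 : 1 ≤ h) (geod : GeodesicSpace X)
    (hcont : ∀ x y : X, ContinuousOn (η x y) (Icc 0 1))
    (hend : ∀ x y : X, η x y 0 = x ∧ η x y 1 = y)
    (hdiam : ∀ x y : X, dist x y ≤ 1 → Metric.diam (η x y '' Icc 0 1) ≤ h)
    (hsub : ∀ x y : X, ∀ s t : ℝ, 0 ≤ s → s ≤ t → t ≤ 1 →
      Metric.hausdorffDist (η x y '' Icc s t) (η (η x y s) (η x y t) '' Icc (0:ℝ) 1) ≤ h)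
    (hthin : ∀ x y z : X, ∀ p ∈ η x y '' Icc (0:ℝ) 1,
      infDist p ((η x z '' Icc (0:ℝ) 1) ∪ (η z y '' Icc (0:ℝ) 1)) ≤ h)
    (x y : X) (c : ℝ → X) (hc0 : c 0 = x) (hcL : c (dist x y) = y)
    (hgeo : IsGeodesicOn c 0 (dist x y)) :
    ∀ w ∈ c '' Icc 0 (dist x y),
      infDist w (η x y '' Icc (0:ℝ) 1) ≤ 2*(396 * h^2 + 3*h) := by
  set K := 396 * h^2 + 3*h with hK
  set L := dist x y with hLdef
  have hL : 0 ≤ L := dist_nonneg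
  set G := c '' Icc 0 L with hGdef
  have hGc : IsCompact G := isCompact_Icc.image_of_continuousOn (geodesic_continuousOn hgeo)
  have hGne : G.Nonempty := ⟨c 0, 0, ⟨le_refl _, hL⟩, rfl⟩
  have hcx : ∀ s, s ∈ Icc 0 L → dist (c s) x = s := by
    intro s hs
    rw [← hc0, hgeo s hs 0 ⟨le_refl _, hL⟩, sub_zero, abs_of_nonneg hs.1]
  have hcy : ∀ s, s ∈ Icc 0 L → dist (c s) y = L - s := by
    intro s hs
    rw [← hcL, hgeo s hs L ⟨hL, le_refl _⟩, abs_sub_comm, abs_of_nonneg (by linarith [hs.2])]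
  rintro w ⟨τ, hτ, rfl⟩
  set g := fun v => dist (η x y v) x - dist (η x y v) y with hgdef
  have hgc : ContinuousOn g (Icc (0:ℝ) 1) :=
    ((continuous_id.dist continuous_const).comp_continuousOn (hcont x y)).sub
      ((continuous_id.dist continuous_const).comp_continuousOn (hcont x y))
  have hg0 : g 0 = -L := by
    simp only [hgdef, (hend x y).1, dist_self, dist_comm]
    simp [hLdef]
  have hg1 : g 1 = L := by
    simp only [hgdef, (hend x y).2, dist_self]
    simp [hLdef, dist_comm]
  have hval : (2*τ - L) ∈ Icc (g 0) (g 1) := by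
    rw [hg0, hg1]
    constructor
    · linarith [hτ.1]
    · linarith [hτ.2]
  obtain ⟨v, hv, hgv⟩ := intermediate_value_Icc zero_le_one hgc hval
  have hqK : infDist (η x y v) G ≤ K :=
    eta_near_geodesic η h h1 geod hcont hend hdiam hsub hthin x y c hc0 hcL hgeo
      (η x y v) ⟨v, hv, rfl⟩
  obtain ⟨w1, hw1G, hw1⟩ := hGc.exists_infDist_eq_dist hGne (η x y v)
  obtain ⟨σ, hσ, rfl⟩ := hw1G
  have hqw1 : dist (η x y v) (c σ) ≤ K := by rw [← hw1]; exact hqK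
  have e1 : dist (η x y v) x ≤ σ + K := by
    have := dist_triangle (η x y v) (c σ) x
    rw [hcx σ hσ] at this; linarith
  have e2 : σ - K ≤ dist (η x y v) x := by
    have := dist_triangle (c σ) (η x y v) x
    rw [dist_comm (c σ) (η x y v), hcx σ hσ] at this; linarith
  have e3 : dist (η x y v) y ≤ (L - σ) + K := by
    have := dist_triangle (η x y v) (c σ) y
    rw [hcy σ hσ] at this; linarith
  have e4 : (L - σ) - K ≤ dist (η x y v) y := by
    have := dist_triangle (c σ) (η x y v) y
    rw [dist_comm (c σ) (η x y v), hcy σ hσ] at this; linarith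
  have hgv' : dist (η x y v) x - dist (η x y v) y = 2*τ - L := hgv
  have hστ : |σ - τ| ≤ K := abs_le.mpr ⟨by linarith, by linarith⟩
  have hfinal : dist (c τ) (η x y v) ≤ 2*K := by
    calc dist (c τ) (η x y v) ≤ dist (c τ) (c σ) + dist (c σ) (η x y v) := dist_triangle _ _ _
      _ ≤ |τ - σ| + K := by
          rw [hgeo τ hτ σ hσ, dist_comm (c σ) (η x y v)]
          linarith
      _ ≤ 2*K := by
          rw [abs_sub_comm]
          linarith [abs_le.mp hστ]
  calc infDist (c τ) (η x y '' Icc (0:ℝ) 1) ≤ dist (c τ) (η x y v) :=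
        infDist_le_dist_of_mem ⟨v, hv, rfl⟩
    _ ≤ 2*K := hfinal

end Main

/-- If a geodesic metric space admits a family of paths `η(x,y)` satisfying
the three conditions of Proposition 3.5 with constant `D > 0`, then it is `δ`-hyperbolic
for a constant `δ > 0` depending only on `D`. -/
theorem curve_family_implies_hyperbolic.{u} :
    ∀ D : ℝ, 0 < D → ∃ δ : ℝ, 0 < δ ∧
      ∀ (X : Type u) [MetricSpace X], GeodesicSpace X →
      ∀ η : X → X → ℝ → X,
        (∀ x y : X, ContinuousOn (η x y) (Set.Icc 0 1)) →
        (∀ x y : X, η x y 0 = x ∧ η x y 1 = y) →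
        -- (1) short distance implies bounded diameter
        (∀ x y : X, dist x y ≤ 1 → Metric.diam (η x y '' Set.Icc 0 1) ≤ D) →
        -- (2) stability under restriction
        (∀ x y : X, ∀ s t : ℝ, 0 ≤ s → s ≤ t → t ≤ 1 →
          Metric.hausdorffDist (η x y '' Set.Icc s t)
            (η (η x y s) (η x y t) '' Set.Icc (0:ℝ) 1) ≤ D) →
        -- (3) thinness of η-triangles
        (∀ x y z : X, ∀ p ∈ η x y '' Set.Icc (0:ℝ) 1,
          Metric.infDist p
            ((η x z '' Set.Icc (0:ℝ) 1) ∪ (η z y '' Set.Icc (0:ℝ) 1)) ≤ D) →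
        ThinTriangles X δ := by
  intro D hD
  refine ⟨1200 * (max D 1)^2, by positivity, ?_⟩
  intro X _ geod η hcont hend hdiamD hsubD hthinD
  set h := max D 1 with hhdef
  have h1 : 1 ≤ h := le_max_right _ _
  have hDh : D ≤ h := le_max_left _ _
  have hdiam : ∀ x y : X, dist x y ≤ 1 → Metric.diam (η x y '' Set.Icc 0 1) ≤ h :=
    fun x y hxy => (hdiamD x y hxy).trans hDh
  have hsub : ∀ x y : X, ∀ s t : ℝ, 0 ≤ s → s ≤ t → t ≤ 1 →
      Metric.hausdorffDist (η x y '' Set.Icc s t)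
        (η (η x y s) (η x y t) '' Set.Icc (0:ℝ) 1) ≤ h :=
    fun x y s t hs hst ht => (hsubD x y s t hs hst ht).trans hDh
  have hthin : ∀ x y z : X, ∀ p ∈ η x y '' Set.Icc (0:ℝ) 1,
      Metric.infDist p ((η x z '' Set.Icc (0:ℝ) 1) ∪ (η z y '' Set.Icc (0:ℝ) 1)) ≤ h :=
    fun x y z p hp => (hthinD x y z p hp).trans hDh
  have hne : ∀ u v : X, (η u v '' Set.Icc (0:ℝ) 1).Nonempty :=
    fun u v => (Set.nonempty_Icc.mpr zero_le_one).image _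
  intro x y z sa sb sc hsa hsb hsc p hp
  obtain ⟨ha0, haL, hageo⟩ := hsa
  obtain ⟨hb0, hbL, hbgeo⟩ := hsb
  obtain ⟨hc0, hcL, hcgeo⟩ := hsc
  set K := 396 * h^2 + 3*h with hK
  have hKpos : 0 < K := by nlinarith [h1]
  have hB := geodesic_near_eta η h h1 geod hcont hend hdiam hsub hthin x y sc hc0 hcL hcgeo p hp
  set S := (sa '' Set.Icc 0 (dist y z)) ∪ (sb '' Set.Icc 0 (dist z x)) with hSdef
  refine le_of_forall_pos_le_add ?_
  intro ε hε
  obtain ⟨q, hq, hpq⟩ := (infDist_lt_iff (hne x y)).mp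
    (lt_of_le_of_lt hB (by linarith : 2*K < 2*K + ε/2))
  have hth := hthin x y z q hq
  have hUne : ((η x z '' Set.Icc (0:ℝ) 1) ∪ (η z y '' Set.Icc (0:ℝ) 1)).Nonempty :=
    ⟨η x z 0, Or.inl ⟨0, ⟨le_refl _, zero_le_one⟩, rfl⟩⟩
  obtain ⟨q', hq', hqq'⟩ := (infDist_lt_iff hUne).mp
    (lt_of_le_of_lt hth (by linarith : h < h + ε/2))
  have hfinal : infDist q' S ≤ K := by
    rcases hq' with hq' | hq'
    · -- q' on η x z ; compare with side b reversed
      set d := dist z x with hd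
      have hdxz : dist x z = d := dist_comm x z
      set cb : ℝ → X := fun t => sb (d - t) with hcb
      have hcb0 : cb 0 = x := by simp only [hcb, sub_zero]; exact hbL
      have hcbL : cb (dist x z) = z := by
        simp only [hcb, hdxz, sub_self]; exact hb0
      have hcbgeo : IsGeodesicOn cb 0 (dist x z) := by
        intro s hs t ht
        rw [hdxz] at hs ht
        have := hbgeo (d - s) ⟨by linarith [hs.2], by linarith [hs.1]⟩
          (d - t) ⟨by linarith [ht.2], by linarith [ht.1]⟩
        simp only [hcb]
        rw [this, show d - s - (d - t) = t - s by ring, abs_sub_comm]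
      have hA := eta_near_geodesic η h h1 geod hcont hend hdiam hsub hthin x z cb hcb0 hcbL
        hcbgeo q' hq'
      have hsubset : cb '' Set.Icc 0 (dist x z) ⊆ S := by
        rintro _ ⟨t, ht, rfl⟩
        rw [hdxz] at ht
        exact Or.inr ⟨d - t, ⟨by linarith [ht.2], by linarith [ht.1]⟩, rfl⟩
      have hcbne : (cb '' Set.Icc 0 (dist x z)).Nonempty :=
        ⟨cb 0, 0, ⟨le_refl _, dist_nonneg⟩, rfl⟩
      exact le_trans (infDist_le_infDist_of_subset hsubset hcbne) hA
    · -- q' on η z y ; compare with side a reversed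
      set d := dist y z with hd
      have hdzy : dist z y = d := dist_comm z y
      set ca : ℝ → X := fun t => sa (d - t) with hca
      have hca0 : ca 0 = z := by simp only [hca, sub_zero]; exact haL
      have hcaL : ca (dist z y) = y := by
        simp only [hca, hdzy, sub_self]; exact ha0
      have hcageo : IsGeodesicOn ca 0 (dist z y) := by
        intro s hs t ht
        rw [hdzy] at hs ht
        have := hageo (d - s) ⟨by linarith [hs.2], by linarith [hs.1]⟩
          (d - t) ⟨by linarith [ht.2], by linarith [ht.1]⟩
        simp only [hca]
        rw [this, show d - s - (d - t) = t - s by ring, abs_sub_comm]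
      have hA := eta_near_geodesic η h h1 geod hcont hend hdiam hsub hthin z y ca hca0 hcaL
        hcageo q' hq'
      have hsubset : ca '' Set.Icc 0 (dist z y) ⊆ S := by
        rintro _ ⟨t, ht, rfl⟩
        rw [hdzy] at ht
        exact Or.inl ⟨d - t, ⟨by linarith [ht.2], by linarith [ht.1]⟩, rfl⟩
      have hcane : (ca '' Set.Icc 0 (dist z y)).Nonempty :=
        ⟨ca 0, 0, ⟨le_refl _, dist_nonneg⟩, rfl⟩
      exact le_trans (infDist_le_infDist_of_subset hsubset hcane) hA
  have htri1 : infDist p S ≤ infDist q S + dist p q := infDist_le_infDist_add_dist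
  have htri2 : infDist q S ≤ infDist q' S + dist q q' := infDist_le_infDist_add_dist
  have : infDist p S ≤ 3*K + h + ε := by linarith
  have hKb : 3*K + h ≤ 1200 * h^2 := by nlinarith [h1]
  linarith
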